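/- arXiv:2509.08922 — 2 statements merged into one kernel-verified Lean document; each statement's English description precedes it below -/
import Mathlib

section
/- Let f = h + conj(g) with h, g holomorphic on the unit disk, h' nonvanishing, and ω = g'/h' satisfying |ω| < 1. Then the Jacobian J = |h'|² - |g'|² satisfies the identity (-log J)_{z z̄} = |ω'|² / (1 - |ω|²)² at every point of the disk. -/
open Complex Metric

/-- Wirtinger derivative ∂/∂z = (∂/∂x - i ∂/∂y)/2. -/
noncomputable def wdz (f : ℂ → ℂ) (z : ℂ) : ℂ :=
  (fderiv ℝ f z 1 - Complex.I * fderiv ℝ f z Complex.I) / 2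

/-- Wirtinger derivative ∂/∂z̄ = (∂/∂x + i ∂/∂y)/2. -/
noncomputable def wdzbar (f : ℂ → ℂ) (z : ℂ) : ℂ :=
  (fderiv ℝ f z 1 + Complex.I * fderiv ℝ f z Complex.I) / 2

noncomputable def wmap (a b : ℂ) : ℂ →L[ℝ] ℂ :=
  a • (ContinuousLinearMap.id ℝ ℂ) + b • (Complex.conjCLE.toContinuousLinearMap)

@[simp] lemma wmap_apply (a b v : ℂ) : wmap a b v = a * v + b * (starRingEnd ℂ) v := by
  simp [wmap]

def Wirt (f : ℂ → ℂ) (z a b : ℂ) : Prop := HasFDerivAt f (wmap a b) z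

lemma Wirt.wdz_eq {f z a b} (hf : Wirt f z a b) : wdz f z = a := by
  have hd : fderiv ℝ f z = wmap a b := HasFDerivAt.fderiv hf
  simp only [wdz, hd, wmap_apply, Complex.conj_I, map_one, mul_one]
  have : (Complex.I : ℂ) * Complex.I = -1 := Complex.I_mul_I
  field_simp
  linear_combination (b - a) * this

lemma Wirt.wdzbar_eq {f z a b} (hf : Wirt f z a b) : wdzbar f z = b := by
  have hd : fderiv ℝ f z = wmap a b := HasFDerivAt.fderiv hf
  simp only [wdzbar, hd, wmap_apply, Complex.conj_I, map_one, mul_one]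
  have : (Complex.I : ℂ) * Complex.I = -1 := Complex.I_mul_I
  field_simp
  linear_combination (a - b) * this

lemma Wirt.congr_of_eventuallyEq {f₁ f z a b} (hf : Wirt f z a b) (h : f₁ =ᶠ[nhds z] f) :
    Wirt f₁ z a b := HasFDerivAt.congr_of_eventuallyEq hf h

lemma Wirt.ofHolo {f : ℂ → ℂ} {z a : ℂ} (hf : HasDerivAt f a z) : Wirt f z a 0 := by
  have h := hf.hasFDerivAt.restrictScalars ℝ
  have e : wmap a 0 = (ContinuousLinearMap.smulRight (1 : ℂ →L[ℂ] ℂ) a).restrictScalars ℝ := by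
    ext v
    simp [mul_comm]
  unfold Wirt
  rw [e]
  exact h

lemma Wirt.const (z c : ℂ) : Wirt (fun _ => c) z 0 0 := by
  have h := hasFDerivAt_const (𝕜 := ℝ) c z
  have e : wmap 0 0 = (0 : ℂ →L[ℝ] ℂ) := by ext v; simp
  unfold Wirt
  rw [e]
  exact h

lemma Wirt.add {f g z a b c d} (hf : Wirt f z a b) (hg : Wirt g z c d) :
    Wirt (fun w => f w + g w) z (a + c) (b + d) := by
  have h := HasFDerivAt.add hf hg
  have e : wmap (a + c) (b + d) = wmap a b + wmap c d := by
    ext v; simp; ring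
  unfold Wirt
  rw [e]
  exact h

lemma Wirt.neg {f z a b} (hf : Wirt f z a b) : Wirt (fun w => -(f w)) z (-a) (-b) := by
  have h := HasFDerivAt.neg hf
  have e : wmap (-a) (-b) = -(wmap a b) := by
    ext v; simp; ring
  unfold Wirt
  rw [e]
  exact h

lemma Wirt.sub {f g z a b c d} (hf : Wirt f z a b) (hg : Wirt g z c d) :
    Wirt (fun w => f w - g w) z (a - c) (b - d) := by
  have := hf.add hg.neg
  simpa [sub_eq_add_neg] using this

lemma Wirt.conj {f z a b} (hf : Wirt f z a b) :
    Wirt (fun w => (starRingEnd ℂ) (f w)) z ((starRingEnd ℂ) b) ((starRingEnd ℂ) a) := by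
  have h := (Complex.conjCLE.toContinuousLinearMap.hasFDerivAt (x := f z)).comp z hf
  have e : wmap ((starRingEnd ℂ) b) ((starRingEnd ℂ) a)
      = Complex.conjCLE.toContinuousLinearMap.comp (wmap a b) := by
    ext v
    simp [map_add, map_mul]
    ring
  unfold Wirt
  rw [e]
  exact h

lemma Wirt.mul {f g z a b c d} (hf : Wirt f z a b) (hg : Wirt g z c d) :
    Wirt (fun w => f w * g w) z (a * g z + f z * c) (b * g z + f z * d) := by
  have h := HasFDerivAt.mul (hf : HasFDerivAt f (wmap a b) z) hg
  have e : wmap (a * g z + f z * c) (b * g z + f z * d)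
      = f z • wmap c d + g z • wmap a b := by
    ext v
    simp [smul_eq_mul]
    ring
  unfold Wirt
  rw [e]
  exact h

lemma Wirt.inv {f z a b} (hf : Wirt f z a b) (h0 : f z ≠ 0) :
    Wirt (fun w => (f w)⁻¹) z (-(a / (f z)^2)) (-(b / (f z)^2)) := by
  have h := ((hasFDerivAt_inv' (𝕜 := ℝ) h0).comp z hf :)
  have e : wmap (-(a / (f z)^2)) (-(b / (f z)^2))
      = (-((ContinuousLinearMap.mulLeftRight ℝ ℂ) (f z)⁻¹) (f z)⁻¹).comp (wmap a b) := by
    ext v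
    simp [ContinuousLinearMap.mulLeftRight_apply]
    field_simp
    ring
  unfold Wirt
  rw [e]
  exact h

lemma Wirt.log {u : ℂ → ℝ} {z : ℂ} {a : ℂ}
    (hu : Wirt (fun w => ((u w : ℝ) : ℂ)) z a ((starRingEnd ℂ) a)) (hpos : 0 < u z) :
    Wirt (fun w => ((Real.log (u w) : ℝ) : ℂ)) z ((((u z)⁻¹ : ℝ) : ℂ) * a)
      ((starRingEnd ℂ) ((((u z)⁻¹ : ℝ) : ℂ) * a)) := by
  have hu' : HasFDerivAt u (Complex.reCLM.comp (wmap a ((starRingEnd ℂ) a))) z := by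
    have h := (Complex.reCLM.hasFDerivAt (x := ((u z : ℝ) : ℂ))).comp z
      (hu : HasFDerivAt _ _ _)
    exact h
  have hlog : HasFDerivAt (fun w => Real.log (u w))
      ((u z)⁻¹ • (Complex.reCLM.comp (wmap a ((starRingEnd ℂ) a)))) z :=
    (Real.hasDerivAt_log (ne_of_gt hpos)).comp_hasFDerivAt z hu'
  have h := (Complex.ofRealCLM.hasFDerivAt (x := Real.log (u z))).comp z hlog
  have e : wmap ((((u z)⁻¹ : ℝ) : ℂ) * a) ((starRingEnd ℂ) ((((u z)⁻¹ : ℝ) : ℂ) * a))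
      = Complex.ofRealCLM.comp ((u z)⁻¹ • (Complex.reCLM.comp (wmap a ((starRingEnd ℂ) a)))) := by
    ext v
    simp [smul_eq_mul]
    rw [Complex.ext_iff]
    constructor <;> simp [Complex.add_re, Complex.add_im, Complex.mul_re, Complex.mul_im] <;> ring
  unfold Wirt
  rw [e]
  exact h

lemma Wirt.congr_ab {f : ℂ → ℂ} {z a b a' b' : ℂ} (hf : Wirt f z a b)
    (ha : a = a') (hb : b = b') : Wirt f z a' b' := ha ▸ hb ▸ hf

theorem stmt_2 (h g : ℂ → ℂ)
    (hh : DifferentiableOn ℂ h (ball (0:ℂ) 1))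
    (hg : DifferentiableOn ℂ g (ball (0:ℂ) 1))
    (hh' : ∀ z ∈ ball (0:ℂ) 1, deriv h z ≠ 0)
    (ω : ℂ → ℂ) (hω : ∀ z, ω z = deriv g z / deriv h z)
    (hω1 : ∀ z ∈ ball (0:ℂ) 1, ‖ω z‖ < 1)
    (J : ℂ → ℝ)
    (hJ : ∀ z, J z = (‖deriv h z‖)^2 - (‖deriv g z‖)^2) :
    ∀ z ∈ ball (0:ℂ) 1,
      wdzbar (fun w => wdz (fun u => (-(Real.log (J u)) : ℂ)) w) z
        = ((‖deriv ω z‖)^2 / (1 - (‖ω z‖)^2)^2 : ℝ) := by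
  intro z hz
  have hob : IsOpen (ball (0:ℂ) 1) := isOpen_ball
  have hhd : DifferentiableOn ℂ (deriv h) (ball (0:ℂ) 1) :=
    ((hh.analyticOnNhd hob).deriv).differentiableOn
  have hhd2 : DifferentiableOn ℂ (deriv (deriv h)) (ball (0:ℂ) 1) :=
    (((hh.analyticOnNhd hob).deriv).deriv).differentiableOn
  have hgd : DifferentiableOn ℂ (deriv g) (ball (0:ℂ) 1) :=
    ((hg.analyticOnNhd hob).deriv).differentiableOn
  have hωd : DifferentiableOn ℂ ω (ball (0:ℂ) 1) := by
    have h1 : DifferentiableOn ℂ (fun w => deriv g w / deriv h w) (ball (0:ℂ) 1) :=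
      hgd.div hhd hh'
    have h2 : ω = fun w => deriv g w / deriv h w := funext hω
    rw [h2]; exact h1
  have hω'd : DifferentiableOn ℂ (deriv ω) (ball (0:ℂ) 1) :=
    ((hωd.analyticOnNhd hob).deriv).differentiableOn
  have hpos1 : ∀ w ∈ ball (0:ℂ) 1, 0 < normSq (deriv h w) :=
    fun w hw => normSq_pos.2 (hh' w hw)
  have hpos2 : ∀ w ∈ ball (0:ℂ) 1, 0 < 1 - normSq (ω w) := by
    intro w hw
    have h1 := hω1 w hw
    nlinarith [Complex.sq_norm (ω w), norm_nonneg (ω w)]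
  have Wbase : ∀ w ∈ ball (0:ℂ) 1, Wirt (fun v => 1 - ω v * (starRingEnd ℂ) (ω v)) w
      (-(deriv ω w * (starRingEnd ℂ) (ω w))) (-(ω w * (starRingEnd ℂ) (deriv ω w))) := by
    intro w hw
    have hωa : HasDerivAt ω (deriv ω w) w :=
      (hωd.differentiableAt (hob.mem_nhds hw)).hasDerivAt
    have W1 := Wirt.ofHolo hωa
    have W3 := W1.mul W1.conj
    have W4 := (Wirt.const w 1).sub W3
    refine W4.congr_ab ?_ ?_ <;> simp <;> ring
  have step1 : ∀ w ∈ ball (0:ℂ) 1, Wirt (fun u => (-(Real.log (J u)) : ℂ)) w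
      (-(((((normSq (deriv h w))⁻¹ : ℝ)) : ℂ) * (deriv (deriv h) w * (starRingEnd ℂ) (deriv h w)) + ((((1 - normSq (ω w))⁻¹ : ℝ)) : ℂ) * (-(deriv ω w * (starRingEnd ℂ) (ω w))))) ((starRingEnd ℂ) (-(((((normSq (deriv h w))⁻¹ : ℝ)) : ℂ) * (deriv (deriv h) w * (starRingEnd ℂ) (deriv h w)) + ((((1 - normSq (ω w))⁻¹ : ℝ)) : ℂ) * (-(deriv ω w * (starRingEnd ℂ) (ω w)))))) := by
    intro w hw
    have hH' : HasDerivAt (deriv h) (deriv (deriv h) w) w :=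
      (hhd.differentiableAt (hob.mem_nhds hw)).hasDerivAt
    have WH := Wirt.ofHolo hH'
    have Wu1 : Wirt (fun v => ((normSq (deriv h v) : ℝ) : ℂ)) w
        (deriv (deriv h) w * (starRingEnd ℂ) (deriv h w))
        ((starRingEnd ℂ) (deriv (deriv h) w * (starRingEnd ℂ) (deriv h w))) := by
      have W := WH.mul WH.conj
      have hfe : (fun v => ((normSq (deriv h v) : ℝ) : ℂ))
          = fun v => deriv h v * (starRingEnd ℂ) (deriv h v) := by
        funext v; rw [Complex.mul_conj]
      rw [hfe]
      refine W.congr_ab ?_ ?_ <;> simp <;> ring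
    have Wl1 := Wu1.log (hpos1 w hw)
    have Wu2 : Wirt (fun v => ((1 - normSq (ω v) : ℝ) : ℂ)) w
        (-(deriv ω w * (starRingEnd ℂ) (ω w)))
        ((starRingEnd ℂ) (-(deriv ω w * (starRingEnd ℂ) (ω w)))) := by
      have W := Wbase w hw
      have hfe : (fun v => ((1 - normSq (ω v) : ℝ) : ℂ))
          = fun v => 1 - ω v * (starRingEnd ℂ) (ω v) := by
        funext v; push_cast [Complex.mul_conj]; ring
      rw [hfe]
      refine W.congr_ab rfl ?_
      simp; ring
    have Wl2 := Wu2.log (hpos2 w hw)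
    have Wsum := (Wl1.add Wl2).neg
    have heq : (fun u => (-(Real.log (J u)) : ℂ)) =ᶠ[nhds w]
        (fun v => -(((Real.log (normSq (deriv h v)) : ℝ) : ℂ)
          + ((Real.log (1 - normSq (ω v)) : ℝ) : ℂ))) := by
      filter_upwards [hob.mem_nhds hw] with v hv
      have hgv : deriv g v = ω v * deriv h v := by
        rw [hω v]; exact (div_mul_cancel₀ _ (hh' v hv)).symm
      have hJv : J v = normSq (deriv h v) * (1 - normSq (ω v)) := by
        rw [hJ v, hgv]
        simp only [norm_mul, mul_pow, Complex.sq_norm]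
        ring
      rw [hJv, Real.log_mul (ne_of_gt (hpos1 v hv)) (ne_of_gt (hpos2 v hv))]
      push_cast; ring
    exact (Wsum.congr_of_eventuallyEq heq).congr_ab rfl (by simp)
  have hev : (fun w' => wdz (fun u => (-(Real.log (J u)) : ℂ)) w') =ᶠ[nhds z]
      (fun w => -(((((normSq (deriv h w))⁻¹ : ℝ)) : ℂ) * (deriv (deriv h) w * (starRingEnd ℂ) (deriv h w)) + ((((1 - normSq (ω w))⁻¹ : ℝ)) : ℂ) * (-(deriv ω w * (starRingEnd ℂ) (ω w))))) := by
    filter_upwards [hob.mem_nhds hz] with v hv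
    exact (step1 v hv).wdz_eq
  have hT1d : DifferentiableAt ℂ (fun v => deriv (deriv h) v / deriv h v) z :=
    (hhd2.differentiableAt (hob.mem_nhds hz)).div
      (hhd.differentiableAt (hob.mem_nhds hz)) (hh' z hz)
  have WT1 : Wirt (fun v => ((((normSq (deriv h v))⁻¹ : ℝ)) : ℂ)
        * (deriv (deriv h) v * (starRingEnd ℂ) (deriv h v))) z
      (deriv (fun v => deriv (deriv h) v / deriv h v) z) 0 := by
    have W := Wirt.ofHolo hT1d.hasDerivAt
    refine W.congr_of_eventuallyEq ?_
    filter_upwards [hob.mem_nhds hz] with v hv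
    have hv0 : deriv h v ≠ 0 := hh' v hv
    have hvc : (starRingEnd ℂ) (deriv h v) ≠ 0 := by simpa using hv0
    rw [Complex.ofReal_inv, ← Complex.mul_conj]
    field_simp
  have hωz : HasDerivAt ω (deriv ω z) z := (hωd.differentiableAt (hob.mem_nhds hz)).hasDerivAt
  have hω2z : HasDerivAt (deriv ω) (deriv (deriv ω) z) z :=
    (hω'd.differentiableAt (hob.mem_nhds hz)).hasDerivAt
  have ht : ((1 : ℂ) - ω z * (starRingEnd ℂ) (ω z)) = ((1 - normSq (ω z) : ℝ) : ℂ) := by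
    rw [Complex.mul_conj]; push_cast; ring
  have ht0 : (1 : ℂ) - ω z * (starRingEnd ℂ) (ω z) ≠ 0 := by
    rw [ht]; exact_mod_cast (ne_of_gt (hpos2 z hz))
  have Winv := (Wbase z hz).inv ht0
  have Wf4 := ((Wirt.ofHolo hω2z).mul (Wirt.ofHolo hωz).conj).neg
  have WT2' := Winv.mul Wf4
  have hfe : (fun v => ((1 : ℂ) - ω v * (starRingEnd ℂ) (ω v))⁻¹
        * (-(deriv ω v * (starRingEnd ℂ) (ω v))))
      = (fun v => ((((1 - normSq (ω v))⁻¹ : ℝ)) : ℂ) * (-(deriv ω v * (starRingEnd ℂ) (ω v)))) := by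
    funext v
    congr 1
    rw [Complex.ofReal_inv]
    congr 1
    rw [Complex.mul_conj]; push_cast; ring
  have WT2 := hfe ▸ WT2'
  have WA := (WT1.add WT2).neg
  have Wfinal := WA.congr_of_eventuallyEq hev
  rw [Wfinal.wdzbar_eq]
  have e1 : ((‖deriv ω z‖)^2 : ℝ) = normSq (deriv ω z) := Complex.sq_norm _
  have e2 : ((1 - (‖ω z‖)^2 : ℝ)) = 1 - normSq (ω z) := by rw [Complex.sq_norm]
  rw [e1, e2, Complex.ofReal_div, Complex.ofReal_pow, ← ht, ← Complex.mul_conj]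
  field_simp
  ring
end

section
/- Let f and F be sense-preserving harmonic functions on the unit disk with the same Jacobian J = |h'|² - |g'|² = |H'|² - |G'|², and suppose their dilatations satisfy ω_F = T∘ω with T a disk automorphism T(w) = e^{iγ}(w+z₀)/(1+conj(z₀)w). Then |H'| = |h' + conj(z₀)g'|/√(1-|z₀|²) and |G'| = |g' + z₀h'|/√(1-|z₀|²) pointwise. -/
open Complex Metric

private lemma stmt_15_aux (a b A B z₀ : ℂ) (γ : ℝ) (ha : a ≠ 0) (hA : A ≠ 0)
    (hz₀ : ‖z₀‖ < 1)
    (hω : ‖b / a‖ < 1)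
    (hJ : (‖A‖)^2 - (‖B‖)^2 = (‖a‖)^2 - (‖b‖)^2)
    (hdil : B / A = Complex.exp (γ * Complex.I) * (b / a + z₀) / (1 + (starRingEnd ℂ) z₀ * (b / a))) :
    ‖A‖ = ‖a + (starRingEnd ℂ) z₀ * b‖ / Real.sqrt (1 - (‖z₀‖)^2)
    ∧ ‖B‖ = ‖b + z₀ * a‖ / Real.sqrt (1 - (‖z₀‖)^2) := by
  have hba : ‖b‖ < ‖a‖ := by
    have h0 : 0 < ‖a‖ := norm_pos_iff.mpr ha
    rw [norm_div, div_lt_one h0] at hω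
    exact hω
  have hda : a + (starRingEnd ℂ) z₀ * b ≠ 0 := by
    intro hc
    have : ‖a‖ = ‖z₀‖ * ‖b‖ := by
      have : a = -((starRingEnd ℂ) z₀ * b) := by linear_combination hc
      rw [this]
      simp [map_mul]
    nlinarith [norm_nonneg b, norm_nonneg z₀]
  have hd : (1 + (starRingEnd ℂ) z₀ * (b / a)) ≠ 0 := by
    have : (1 + (starRingEnd ℂ) z₀ * (b / a)) = (a + (starRingEnd ℂ) z₀ * b) / a := by
      field_simp
    rw [this]
    exact div_ne_zero hda ha
  -- product equation
  have heq : B * (a + (starRingEnd ℂ) z₀ * b) = Complex.exp (γ * Complex.I) * (b + z₀ * a) * A := by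
    field_simp at hdil
    rw [hdil, show a + (starRingEnd ℂ) z₀ * b = a + b * (starRingEnd ℂ) z₀ by ring,
      div_mul_cancel₀ _ (by rwa [mul_comm ((starRingEnd ℂ) z₀) b] at hda)]
    ring
  have habs : ‖B‖ * ‖a + (starRingEnd ℂ) z₀ * b‖
      = ‖b + z₀ * a‖ * ‖A‖ := by
    have := congrArg (‖·‖) heq
    simpa [map_mul, Complex.norm_exp, mul_comm, mul_assoc, mul_left_comm] using this
  set P := ‖a + (starRingEnd ℂ) z₀ * b‖ with hP
  set Q := ‖b + z₀ * a‖ with hQ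
  set X := ‖A‖ with hX
  set Y := ‖B‖ with hY
  have hs : (0:ℝ) < 1 - (‖z₀‖)^2 := by nlinarith [norm_nonneg z₀]
  set s := 1 - (‖z₀‖)^2 with hsdef
  have hPQ : P^2 - Q^2 = s * ((‖a‖)^2 - (‖b‖)^2) := by
    rw [hP, hQ, hsdef]
    rw [Complex.sq_norm, Complex.sq_norm, Complex.sq_norm, Complex.sq_norm, Complex.sq_norm]
    simp only [Complex.normSq_apply, Complex.add_re, Complex.add_im, Complex.mul_re,
      Complex.mul_im, Complex.conj_re, Complex.conj_im]
    ring
  have hJpos : (0:ℝ) < (‖a‖)^2 - (‖b‖)^2 := by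
    nlinarith [norm_nonneg b]
  have hPpos : (0:ℝ) < P := by
    rw [hP]; exact norm_pos_iff.mpr hda
  have hXnn : 0 ≤ X := norm_nonneg A
  have hYnn : 0 ≤ Y := norm_nonneg B
  have hsq : (Y*P)^2 = (Q*X)^2 := by rw [habs]
  have h5 : (X^2 * s) * ((‖a‖)^2 - (‖b‖)^2)
      = P^2 * ((‖a‖)^2 - (‖b‖)^2) := by
    linear_combination (-X^2)*hPQ + P^2*hJ + hsq
  have hX2 : X^2 * s = P^2 := mul_right_cancel₀ hJpos.ne' h5
  have hss : (0:ℝ) < Real.sqrt s := Real.sqrt_pos.mpr hs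
  have hXv : X = P / Real.sqrt s := by
    rw [eq_div_iff hss.ne']
    have h1 : (X * Real.sqrt s)^2 = P^2 := by
      rw [mul_pow, Real.sq_sqrt hs.le]; exact hX2
    have h2 : 0 ≤ X * Real.sqrt s := by positivity
    calc X * Real.sqrt s = Real.sqrt ((X * Real.sqrt s)^2) := (Real.sqrt_sq h2).symm
      _ = Real.sqrt (P^2) := by rw [h1]
      _ = P := Real.sqrt_sq hPpos.le
  refine ⟨hXv, ?_⟩
  -- Y = Q / sqrt s
  have h6 : Y * P = (Q / Real.sqrt s) * P := by rw [habs, hXv]; ring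
  exact mul_right_cancel₀ hPpos.ne' h6

theorem stmt_15 (h g H G : ℂ → ℂ)
    (hh : DifferentiableOn ℂ h (ball (0:ℂ) 1))
    (hg : DifferentiableOn ℂ g (ball (0:ℂ) 1))
    (hH : DifferentiableOn ℂ H (ball (0:ℂ) 1))
    (hG : DifferentiableOn ℂ G (ball (0:ℂ) 1))
    (hh' : ∀ z ∈ ball (0:ℂ) 1, deriv h z ≠ 0)
    (hH' : ∀ z ∈ ball (0:ℂ) 1, deriv H z ≠ 0)
    (hω : ∀ z ∈ ball (0:ℂ) 1, ‖deriv g z / deriv h z‖ < 1)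
    (hωF : ∀ z ∈ ball (0:ℂ) 1, ‖deriv G z / deriv H z‖ < 1)
    (z₀ : ℂ) (hz₀ : ‖z₀‖ < 1) (γ : ℝ)
    (hJ : ∀ z ∈ ball (0:ℂ) 1,
      (‖deriv H z‖)^2 - (‖deriv G z‖)^2
        = (‖deriv h z‖)^2 - (‖deriv g z‖)^2)
    (hdil : ∀ z ∈ ball (0:ℂ) 1,
      deriv G z / deriv H z
        = Complex.exp (γ * Complex.I) * (deriv g z / deriv h z + z₀)
            / (1 + (starRingEnd ℂ) z₀ * (deriv g z / deriv h z))) :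
    ∀ z ∈ ball (0:ℂ) 1,
      ‖deriv H z‖
          = ‖deriv h z + (starRingEnd ℂ) z₀ * deriv g z‖
              / Real.sqrt (1 - (‖z₀‖)^2)
      ∧ ‖deriv G z‖
          = ‖deriv g z + z₀ * deriv h z‖
              / Real.sqrt (1 - (‖z₀‖)^2) := by
  intro z hz
  exact stmt_15_aux (deriv h z) (deriv g z) (deriv H z) (deriv G z) z₀ γ
    (hh' z hz) (hH' z hz) hz₀ (hω z hz) (hJ z hz) (hdil z hz)
end
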